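/- Laplace-type bound: for a, ξ > 0, ∫_0^∞ e^{−t⁴/2 − aξ/(2t)} dt ≤ √(2π) · e^{−(5/2)(aξ/4)^{4/5}} / √(φ''(t₀)), where t₀ = (aξ/4)^{1/5} and φ(t) = t⁴/2 + aξ/(2t). In particular ∫_0^∞ e^{−t⁴/2 − aξ/(2t)} dt ≤ C e^{−c ξ^{4/5}} for constants c, C > 0 depending only on a. -/

import Mathlib

open MeasureTheory Real Set

lemma keyineq (u t : ℝ) (hu : 0 < u) (ht : 0 < t) :
    (5/2)*u^4 + 5*u^2*(t-u)^2 ≤ t^4/2 + (4*u^5)/(2*t) := by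
  have key : t^4/2 + (4*u^5)/(2*t) - ((5/2)*u^4 + 5*u^2*(t-u)^2)
      = (t-u)^4*(t+4*u)/(2*t) := by field_simp; ring
  nlinarith [div_nonneg (mul_nonneg (by positivity : (0:ℝ) ≤ (t-u)^4) (by linarith : (0:ℝ) ≤ t+4*u)) (by linarith : (0:ℝ) ≤ 2*t)]

lemma hd1 (c t : ℝ) (ht : t ≠ 0) :
    HasDerivAt (fun t : ℝ => t^4/2 + c/(2*t)) (2*t^3 - c/(2*t^2)) t := by
  have h1 : HasDerivAt (fun t : ℝ => t^4/2) (2*t^3) t := by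
    have := (hasDerivAt_pow 4 t).div_const 2
    exact this.congr_deriv (by norm_num; ring)
  have h2 : HasDerivAt (fun t : ℝ => c/(2*t)) (-(c/(2*t^2))) t := by
    have := (hasDerivAt_const t c).div ((hasDerivAt_id t).const_mul 2) (by simpa using ht)
    exact this.congr_deriv (by simp only [id]; field_simp; ring)
  exact (h1.add h2).congr_deriv (by ring)

lemma hd2 (c t : ℝ) (ht : t ≠ 0) :
    HasDerivAt (fun t : ℝ => 2*t^3 - c/(2*t^2)) (6*t^2 + c/t^3) t := by
  have h1 : HasDerivAt (fun t : ℝ => 2*t^3) (6*t^2) t := by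
    have := (hasDerivAt_pow 3 t).const_mul 2
    exact this.congr_deriv (by norm_num; ring)
  have h2 : HasDerivAt (fun t : ℝ => c/(2*t^2)) (-(c/t^3)) t := by
    have := (hasDerivAt_const t c).div (((hasDerivAt_pow 2 t)).const_mul 2)
      (by simp [pow_eq_zero_iff]; exact ht)
    exact this.congr_deriv (by field_simp; ring)
  exact (h1.sub h2).congr_deriv (by ring)

lemma derivderiv (c t₀ : ℝ) (ht₀ : t₀ ≠ 0) :
    deriv (deriv (fun t : ℝ => t^4/2 + c/(2*t))) t₀ = 6*t₀^2 + c/t₀^3 := by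
  have hev : deriv (fun t : ℝ => t^4/2 + c/(2*t)) =ᶠ[nhds t₀]
      (fun t : ℝ => 2*t^3 - c/(2*t^2)) := by
    filter_upwards [isOpen_compl_singleton.mem_nhds (by simpa using ht₀ :
        t₀ ∈ ({0}ᶜ : Set ℝ))] with t ht
    exact (hd1 c t (by simpa using ht)).deriv
  rw [hev.deriv_eq]
  exact (hd2 c t₀ ht₀).deriv

lemma part1 (a ξ : ℝ) (ha : 0 < a) (hξ : 0 < ξ) :
    (∫ t in Set.Ioi (0:ℝ), Real.exp (-t^4/2 - a*ξ/(2*t))) ≤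
        Real.sqrt (2 * Real.pi) * Real.exp (-(5/2) * (a*ξ/4) ^ ((4:ℝ)/5)) /
          Real.sqrt (deriv (deriv (fun t : ℝ => t^4/2 + a*ξ/(2*t)))
            ((a*ξ/4) ^ ((1:ℝ)/5))) := by
  have hb : 0 < a*ξ/4 := by positivity
  set b := a*ξ/4 with hbdef
  set t₀ : ℝ := b ^ ((1:ℝ)/5) with ht₀def
  have ht₀ : 0 < t₀ := rpow_pos_of_pos hb _
  have ht5 : t₀^5 = b := by
    rw [ht₀def, ← rpow_natCast (b ^ ((1:ℝ)/5)) 5, ← rpow_mul hb.le]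
    norm_num
  have ht4 : t₀^4 = b ^ ((4:ℝ)/5) := by
    rw [ht₀def, ← rpow_natCast (b ^ ((1:ℝ)/5)) 4, ← rpow_mul hb.le]
    norm_num
  have haξ : a*ξ = 4*t₀^5 := by rw [ht5]; rw [hbdef]; ring
  have hD : deriv (deriv (fun t : ℝ => t^4/2 + a*ξ/(2*t))) t₀ = 10*t₀^2 := by
    rw [derivderiv (a*ξ) t₀ ht₀.ne', haξ]
    field_simp
    ring
  set p : ℝ := 5*t₀^2 with hpdef
  have hp : 0 < p := by positivity
  have hgint : Integrable (fun x : ℝ => exp (-p*(x-t₀)^2)) :=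
    (integrable_exp_neg_mul_sq hp).comp_sub_right t₀
  have hgval : (∫ x : ℝ, exp (-p*(x-t₀)^2)) = Real.sqrt (π/p) :=
    (integral_sub_right_eq_self (fun y => exp (-p*y^2)) t₀).trans (integral_gaussian p)
  set E : ℝ := Real.exp (-(5/2) * b ^ ((4:ℝ)/5)) with hEdef
  have hpt : ∀ t ∈ Set.Ioi (0:ℝ),
      Real.exp (-t^4/2 - a*ξ/(2*t)) ≤ E * exp (-p*(t-t₀)^2) := by
    intro t ht
    rw [Set.mem_Ioi] at ht
    have k := keyineq t₀ t ht₀ ht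
    have : Real.exp (-t^4/2 - a*ξ/(2*t)) ≤ exp (-(5/2)*t₀^4 + (-p*(t-t₀)^2)) := by
      apply Real.exp_le_exp.mpr
      rw [haξ, hpdef]
      nlinarith [k]
    refine this.trans_eq ?_
    rw [Real.exp_add, hEdef, ht4]
  calc (∫ t in Set.Ioi (0:ℝ), Real.exp (-t^4/2 - a*ξ/(2*t)))
      ≤ ∫ t in Set.Ioi (0:ℝ), E * exp (-p*(t-t₀)^2) := by
        apply integral_mono_of_nonneg
        · exact Filter.Eventually.of_forall fun t => (exp_pos _).le
        · exact (hgint.const_mul E).restrict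
        · rw [Filter.EventuallyLE, ae_restrict_iff' measurableSet_Ioi]
          exact Filter.Eventually.of_forall hpt
    _ ≤ ∫ t : ℝ, E * exp (-p*(t-t₀)^2) := by
        apply setIntegral_le_integral (hgint.const_mul E)
        exact Filter.Eventually.of_forall fun t => by positivity
    _ = E * Real.sqrt (π/p) := by rw [integral_const_mul, hgval]
    _ = Real.sqrt (2 * π) * E / Real.sqrt (10*t₀^2) := by
        rw [show π/p = (2*π)/(10*t₀^2) by rw [hpdef]; ring,
          Real.sqrt_div (by positivity : (0:ℝ) ≤ 2*π)]
        ring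
    _ = _ := by rw [hD]


/-- Laplace-type bound: for `a, ξ > 0`,
`∫_0^∞ e^{-t⁴/2 - aξ/(2t)} dt ≤ √(2π) e^{-(5/2)(aξ/4)^{4/5}} / √(φ''(t₀))`
with `t₀ = (aξ/4)^{1/5}`, `φ(t) = t⁴/2 + aξ/(2t)`; in particular for each `a > 0`
there are `c, C > 0` with `∫_0^∞ e^{-t⁴/2 - aξ/(2t)} dt ≤ C e^{-c ξ^{4/5}}`
for all `ξ > 0`. -/
theorem stmt_16 (a : ℝ) (ha : 0 < a) :
    (∀ ξ : ℝ, 0 < ξ →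
      (∫ t in Set.Ioi (0:ℝ), Real.exp (-t^4/2 - a*ξ/(2*t))) ≤
        Real.sqrt (2 * Real.pi) * Real.exp (-(5/2) * (a*ξ/4) ^ ((4:ℝ)/5)) /
          Real.sqrt (deriv (deriv (fun t : ℝ => t^4/2 + a*ξ/(2*t)))
            ((a*ξ/4) ^ ((1:ℝ)/5)))) ∧
    (∃ c > 0, ∃ C > 0, ∀ ξ : ℝ, 0 < ξ →
      (∫ t in Set.Ioi (0:ℝ), Real.exp (-t^4/2 - a*ξ/(2*t))) ≤
        C * Real.exp (-c * ξ ^ ((4:ℝ)/5))) := by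
  constructor
  · exact fun ξ hξ => part1 a ξ ha hξ
  · have hCint : IntegrableOn (fun t : ℝ => Real.exp (-t^4/4)) (Set.Ioi 0) := by
      have h := integrableOn_rpow_mul_exp_neg_mul_rpow (s := 0) (p := 4) (b := 1/4)
        (by norm_num) (by norm_num) (by norm_num)
      apply h.congr_fun ?_ measurableSet_Ioi
      intro x hx
      rw [Set.mem_Ioi] at hx
      simp only [Real.rpow_zero, one_mul]
      rw [show x ^ (4:ℝ) = x ^ (4:ℕ) by rw [← Real.rpow_natCast x 4]; norm_num]
      congr 1
      ring
    set C : ℝ := ∫ t in Set.Ioi (0:ℝ), Real.exp (-t^4/4) with hCdef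
    have hC : 0 < C := by
      rw [hCdef, setIntegral_pos_iff_support_of_nonneg_ae
        (Filter.Eventually.of_forall fun t => (Real.exp_pos _).le) hCint]
      have hsupp : Function.support (fun t : ℝ => Real.exp (-t^4/4)) = Set.univ := by
        ext t; simp [(Real.exp_pos (-t^4/4)).ne']
      simp [hsupp, Real.volume_Ioi]
    refine ⟨(5/4)*(a/4) ^ ((4:ℝ)/5), by positivity, C, hC, fun ξ hξ => ?_⟩
    have hb : 0 < a*ξ/4 := by positivity
    set t₀ : ℝ := (a*ξ/4) ^ ((1:ℝ)/5) with ht₀def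
    have ht₀ : 0 < t₀ := Real.rpow_pos_of_pos hb _
    have ht5 : t₀^5 = a*ξ/4 := by
      rw [ht₀def, ← Real.rpow_natCast ((a*ξ/4) ^ ((1:ℝ)/5)) 5, ← Real.rpow_mul hb.le]
      norm_num
    have ht4 : t₀^4 = (a/4) ^ ((4:ℝ)/5) * ξ ^ ((4:ℝ)/5) := by
      rw [ht₀def, ← Real.rpow_natCast ((a*ξ/4) ^ ((1:ℝ)/5)) 4, ← Real.rpow_mul hb.le,
        show a*ξ/4 = (a/4)*ξ by ring,
        Real.mul_rpow (by positivity) hξ.le]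
      norm_num
    have hpt : ∀ t ∈ Set.Ioi (0:ℝ),
        Real.exp (-t^4/2 - a*ξ/(2*t)) ≤
          Real.exp (-((5/4)*(a/4) ^ ((4:ℝ)/5)) * ξ ^ ((4:ℝ)/5)) * Real.exp (-t^4/4) := by
      intro t ht
      rw [Set.mem_Ioi] at ht
      have k := keyineq t₀ t ht₀ ht
      have haξ : (4:ℝ)*t₀^5 = a*ξ := by rw [ht5]; ring
      rw [← Real.exp_add]
      apply Real.exp_le_exp.mpr
      have hphi : (5/2)*t₀^4 ≤ t^4/2 + a*ξ/(2*t) := by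
        rw [← haξ]
        nlinarith [k, sq_nonneg (t-t₀), sq_nonneg t₀, mul_nonneg (mul_nonneg (by norm_num : (0:ℝ) ≤ 5) (sq_nonneg t₀)) (sq_nonneg (t-t₀))]
      have hpos : 0 ≤ a*ξ/(2*t) := by positivity
      have h54 : (5/4)*(a/4) ^ ((4:ℝ)/5) * ξ ^ ((4:ℝ)/5) = (5/4)*t₀^4 := by
        rw [ht4]; ring
      nlinarith [hphi, hpos]
    calc (∫ t in Set.Ioi (0:ℝ), Real.exp (-t^4/2 - a*ξ/(2*t)))
        ≤ ∫ t in Set.Ioi (0:ℝ),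
            Real.exp (-((5/4)*(a/4) ^ ((4:ℝ)/5)) * ξ ^ ((4:ℝ)/5)) * Real.exp (-t^4/4) := by
          apply integral_mono_of_nonneg
          · exact Filter.Eventually.of_forall fun t => (Real.exp_pos _).le
          · exact hCint.const_mul _
          · rw [Filter.EventuallyLE, ae_restrict_iff' measurableSet_Ioi]
            exact Filter.Eventually.of_forall hpt
      _ = C * Real.exp (-((5/4)*(a/4) ^ ((4:ℝ)/5)) * ξ ^ ((4:ℝ)/5)) := by
          rw [integral_const_mul, mul_comm]
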